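/- Under the setting of the discounted empirical measure: let S_k^n = (Σ_{i=k}^{n+k-1} φ(i))^{-1} Σ_{i=k}^{n+k-1} φ(i) δ_{X_{i-k}} and Q_{k,x}^n(D) = P_{k,x}(S_k^n ∈ D). If f ∈ F_d (continuous, 1 ≤ f, sup f ≤ d inf f) and B ⊂ P(E) is measurable, then Q_{k,x}^n(B) ≤ d · exp(−Σ_{i=k}^{n+k-1} φ(i) · inf_{ζ∈B} ∫ log(f/Pf) dζ). -/

import Mathlib

open MeasureTheory ProbabilityTheory

/-- The discounted empirical measure
`S_k^n = (Σ_{i=k}^{n+k-1} φ(i))^{-1} Σ_{i=k}^{n+k-1} φ(i) δ_{X_{i-k}}`. -/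
noncomputable def discountedEmpirical {Ω E : Type*} [MeasurableSpace E]
    (φ : ℕ → ℝ) (k n : ℕ) (X : ℕ → Ω → E) (ω : Ω) : Measure E :=
  (∑ i ∈ Finset.Ico k (n + k), ENNReal.ofReal (φ i))⁻¹ •
    ∑ i ∈ Finset.Ico k (n + k),
      ENNReal.ofReal (φ i) • Measure.dirac (X (i - k) ω)

/-- Abel-type summation bound used for the telescoping part. -/
lemma abel_sum_bound (a g : ℕ → ℝ) (c : ℝ) (hc : 0 ≤ c) (ha0 : a 0 ≤ 1)
    (hapos : ∀ j, 0 ≤ a j) (hamono : ∀ j, a (j + 1) ≤ a j)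
    (hg : ∀ j, g 0 ≤ c + g j) (n : ℕ) :
    ∑ j ∈ Finset.range n, a j * (g j - g (j + 1)) ≤ c := by
  have key : ∀ m, ∑ j ∈ Finset.range m, a j * (g j - g (j + 1))
      ≤ a 0 * c - a m * (c + g m - g 0) := by
    intro m
    induction m with
    | zero => simp
    | succ m ih =>
      rw [Finset.sum_range_succ]
      have h1 : a (m + 1) * (c + g (m + 1) - g 0) ≤ a m * (c + g (m + 1) - g 0) :=
        mul_le_mul_of_nonneg_right (hamono m) (by have := hg (m + 1); linarith)
      nlinarith [ih]
  have h2 : 0 ≤ a n * (c + g n - g 0) := mul_nonneg (hapos n) (by have := hg n; linarith)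
  have h3 : a 0 * c ≤ c := by nlinarith [hapos 0]
  have := key n
  linarith

theorem discounted_empirical_chernoff_bound
    {Ω E : Type*} {m0 : MeasurableSpace Ω}
    [TopologicalSpace E] [MeasurableSpace E] [BorelSpace E]
    (μ : Measure Ω) [IsProbabilityMeasure μ]
    (ℱ : Filtration ℕ m0)
    (P : Kernel E E) [IsMarkovKernel P]
    (hFeller : ∀ g : E → ℝ, Continuous g → (∀ y, |g y| ≤ 1) →
      Continuous fun y => ∫ z, g z ∂(P y))
    (X : ℕ → Ω → E) (hX : ∀ i, Measurable[ℱ i] (X i))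
    (x : E) (hstart : ∀ᵐ ω ∂μ, X 0 ω = x)
    (f : E → ℝ) (hfc : Continuous f) (hf1 : ∀ y, 1 ≤ f y)
    (d : ℝ) (hfd : ∀ y z, f y ≤ d * f z)
    (hMarkovf : ∀ i, μ[(fun ω => f (X (i + 1) ω)) | ℱ i]
        =ᵐ[μ] fun ω => ∫ y, f y ∂(P (X i ω)))
    (φ : ℕ → ℝ) (hφ0 : φ 0 = 1)
    (hφpos : ∀ i, 0 < φ i) (hφle : ∀ i, φ i ≤ 1)
    (hφmono : ∀ i j, i ≤ j → φ j ≤ φ i)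
    (k n : ℕ)
    (B : Set (Measure E))
    (hBmeas : MeasurableSet {ω | discountedEmpirical φ k n X ω ∈ B}) :
    (μ {ω | discountedEmpirical φ k n X ω ∈ B}).toReal
      ≤ d * Real.exp (-(∑ i ∈ Finset.Ico k (n + k), φ i) *
          sInf {r : ℝ | ∃ ζ ∈ B,
            r = ∫ y, Real.log (f y / ∫ z, f z ∂(P y)) ∂ζ}) := by
  classical
  obtain ⟨Pf, hPfdef⟩ : ∃ Pf : E → ℝ, Pf = fun y => ∫ z, f z ∂(P y) := ⟨_, rfl⟩
  have hPfy : ∀ y, Pf y = ∫ z, f z ∂(P y) := fun y => by rw [hPfdef]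
  -- basic positivity facts
  have hfpos : ∀ y, 0 < f y := fun y => lt_of_lt_of_le one_pos (hf1 y)
  have hd1 : (1 : ℝ) ≤ d := by nlinarith [hfd x x, hf1 x]
  have hdpos : (0 : ℝ) < d := lt_of_lt_of_le one_pos hd1
  have hfub : ∀ y, f y ≤ d * f x := fun y => hfd y x
  have hXm : ∀ i, Measurable (X i) := fun i => (hX i).mono (ℱ.le i) le_rfl
  have hfm : Measurable f := hfc.measurable
  have hfint : ∀ y, Integrable f (P y) := by
    intro y
    refine Integrable.mono' (integrable_const (d * f x)) hfc.measurable.aestronglyMeasurable ?_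
    exact ae_of_all _ fun z => by
      rw [Real.norm_eq_abs, abs_of_pos (hfpos z)]; exact hfub z
  have hPf1 : ∀ y, 1 ≤ Pf y := by
    intro y
    rw [hPfy]
    calc (1 : ℝ) = ∫ _, (1 : ℝ) ∂(P y) := by simp
    _ ≤ ∫ z, f z ∂(P y) := integral_mono (integrable_const 1) (hfint y) hf1
  have hPfpos : ∀ y, 0 < Pf y := fun y => lt_of_lt_of_le one_pos (hPf1 y)
  have hPfub : ∀ y, Pf y ≤ d * f x := by
    intro y
    rw [hPfy]
    calc ∫ z, f z ∂(P y) ≤ ∫ _, d * f x ∂(P y) :=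
          integral_mono (hfint y) (integrable_const _) hfub
    _ = d * f x := by simp
  have hfdPf : ∀ y w, f y ≤ d * Pf w := by
    intro y w
    rw [hPfy]
    calc f y = ∫ _, f y ∂(P w) := by simp
    _ ≤ ∫ z, d * f z ∂(P w) :=
          integral_mono (integrable_const _) ((hfint w).const_mul d) fun z => hfd y z
    _ = d * ∫ z, f z ∂(P w) := integral_const_mul d f
  have hPfc : Continuous Pf := by
    have hCpos : 0 < d * f x := mul_pos hdpos (hfpos x)
    have hg : Continuous fun z => f z / (d * f x) := hfc.div_const _
    have hgb : ∀ y, |f y / (d * f x)| ≤ 1 := by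
      intro y
      rw [abs_of_pos (div_pos (hfpos y) hCpos)]
      exact (div_le_one hCpos).2 (hfub y)
    have h : Continuous fun y => (d * f x) * ∫ z, f z / (d * f x) ∂(P y) :=
      Continuous.mul continuous_const (hFeller _ hg hgb)
    have hEq : Pf = fun y => (d * f x) * ∫ z, f z / (d * f x) ∂(P y) := by
      funext y
      rw [hPfy, ← integral_const_mul]
      congr 1; funext z; field_simp [(hfpos x).ne']
    rw [hEq]
    exact h
  have hPfmeas : Measurable Pf := hPfc.measurable
  -- the log density and its bound
  set lg : E → ℝ := fun y => Real.log (f y / Pf y) with hlgdef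
  have hlgc : Continuous lg := by
    apply (hfc.div hPfc fun y => (hPfpos y).ne').log
    intro y; exact (div_pos (hfpos y) (hPfpos y)).ne'
  have hupos : ∀ y, 0 < f y / Pf y := fun y => div_pos (hfpos y) (hPfpos y)
  have huled : ∀ y, f y / Pf y ≤ d := by
    intro y
    rw [div_le_iff₀ (hPfpos y)]
    linarith [hfdPf y y, mul_comm (Pf y) d]
  have hCb : (1 : ℝ) ≤ d * f x := le_trans hd1 (le_mul_of_one_le_right hdpos.le (hf1 x))
  have hlgb : ∀ y, |lg y| ≤ Real.log (d * f x) := by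
    intro y
    rw [abs_le]
    constructor
    · rw [← Real.log_inv]
      apply Real.log_le_log (by positivity)
      rw [le_div_iff₀ (hPfpos y)]
      calc (d * f x)⁻¹ * Pf y ≤ (d * f x)⁻¹ * (d * f x) :=
            mul_le_mul_of_nonneg_left (hPfub y) (by positivity)
      _ = 1 := inv_mul_cancel₀ (by positivity)
      _ ≤ f y := hf1 y
    · exact le_trans (Real.log_le_log (hupos y) (le_trans (huled y)
        (le_mul_of_one_le_right hdpos.le (hf1 x)))) le_rfl
  -- rewrite the goal in terms of `lg`
  have hfunEq : (fun y => Real.log (f y / ∫ z, f z ∂(P y))) = lg := by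
    funext y; simp only [hlgdef]; rw [hPfy y]
  simp only [hfunEq]
  set c : ℝ := ∑ i ∈ Finset.Ico k (n + k), φ i with hcdef
  have hcnn : 0 ≤ c := Finset.sum_nonneg fun i _ => (hφpos i).le
  set A : Set Ω := {ω | discountedEmpirical φ k n X ω ∈ B} with hAdef
  set T : Set ℝ := {r : ℝ | ∃ ζ ∈ B, r = ∫ y, lg y ∂ζ} with hTdef
  set Z : Ω → ℝ := fun ω =>
    Real.exp (∑ i ∈ Finset.Ico k (n + k), φ i * lg (X (i - k) ω)) with hZdef
  have hdint : ∀ pt : E, Integrable lg (Measure.dirac pt) := by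
    intro pt
    refine Integrable.mono' (integrable_const (Real.log (d * f x)))
      hlgc.measurable.aestronglyMeasurable (ae_of_all _ fun z => ?_)
    rw [Real.norm_eq_abs]; exact hlgb z
  have hsum : ∀ ω, c * (∫ y, lg y ∂(discountedEmpirical φ k n X ω))
      = ∑ i ∈ Finset.Ico k (n + k), φ i * lg (X (i - k) ω) := by
    intro ω
    by_cases hn : n = 0
    · subst hn
      rw [hcdef]
      simp [discountedEmpirical, Finset.Ico_self]
    · have hne : (Finset.Ico k (n + k)).Nonempty := by
        rw [Finset.nonempty_Ico]; omega
      have hcpos : 0 < c := by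
        rw [hcdef]; exact Finset.sum_pos (fun i _ => hφpos i) hne
      have hint_i : ∀ i ∈ Finset.Ico k (n + k),
          Integrable lg (ENNReal.ofReal (φ i) • Measure.dirac (X (i - k) ω)) :=
        fun i _ => (hdint _).smul_measure ENNReal.ofReal_ne_top
      rw [discountedEmpirical, integral_smul_measure, integral_finset_sum_measure hint_i]
      have hterm : ∀ i ∈ Finset.Ico k (n + k),
          ∫ y, lg y ∂(ENNReal.ofReal (φ i) • Measure.dirac (X (i - k) ω))
            = φ i * lg (X (i - k) ω) := by
        intro i _
        rw [integral_smul_measure, integral_dirac' _ _ hlgc.stronglyMeasurable,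
          ENNReal.toReal_ofReal (hφpos i).le, smul_eq_mul]
      rw [Finset.sum_congr rfl hterm]
      have hcE : (∑ i ∈ Finset.Ico k (n + k), ENNReal.ofReal (φ i))⁻¹.toReal = c⁻¹ := by
        rw [ENNReal.toReal_inv, ENNReal.toReal_sum (fun i _ => ENNReal.ofReal_ne_top)]
        congr 1
        rw [hcdef]
        exact Finset.sum_congr rfl fun i _ => ENNReal.toReal_ofReal (hφpos i).le
      rw [hcE, smul_eq_mul, ← mul_assoc, mul_inv_cancel₀ hcpos.ne', one_mul]
  -- nonemptiness of Ω
  have hΩ : Nonempty Ω := by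
    by_contra hne
    rw [not_nonempty_iff] at hne
    have h0 : μ Set.univ = 0 := by
      rw [Set.univ_eq_empty_iff.2 hne]; exact measure_empty
    rw [measure_univ] at h0; exact one_ne_zero h0
  obtain ⟨ω₀⟩ := hΩ
  -- integrability from boundedness
  have intBdd : ∀ (g : Ω → ℝ) (C : ℝ), AEStronglyMeasurable g μ →
      (∀ ω, |g ω| ≤ C) → Integrable g μ :=
    fun g C hm hbd => Integrable.mono' (integrable_const C) hm
      (ae_of_all _ fun ω => by rw [Real.norm_eq_abs]; exact hbd ω)
  -- filtration measurability
  have hXFm : ∀ {j m : ℕ}, j ≤ m → Measurable[ℱ m] (X j) :=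
    fun {j m} hjm => (hX j).mono (ℱ.mono hjm) le_rfl
  -- rpow measurability
  have hPfrpow_meas : ∀ (mm : MeasurableSpace Ω) (m : ℕ) (t : ℝ),
      Measurable[mm] (X m) → Measurable[mm] fun ω => Pf (X m ω) ^ t := by
    intro mm m t hXmm
    have heq : (fun ω => Pf (X m ω) ^ t)
        = fun ω => Real.exp (Real.log (Pf (X m ω)) * t) :=
      funext fun ω => Real.rpow_def_of_pos (hPfpos _) _
    rw [heq]
    exact (((hPfmeas.comp hXmm).log).mul measurable_const).exp
  have hfrpow_meas : ∀ (m : ℕ) (t : ℝ), Measurable fun ω => f (X m ω) ^ t := by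
    intro m t
    have heq : (fun ω => f (X m ω) ^ t)
        = fun ω => Real.exp (Real.log (f (X m ω)) * t) :=
      funext fun ω => Real.rpow_def_of_pos (hfpos _) _
    rw [heq]
    exact (((hfm.comp (hXm m)).log).mul measurable_const).exp
  -- rpow bounds
  have hPfrpow_le : ∀ y (t : ℝ), t ≤ 1 → Pf y ^ t ≤ d * f x := by
    intro y t ht
    calc Pf y ^ t ≤ Pf y ^ (1 : ℝ) :=
        Real.rpow_le_rpow_of_exponent_le (hPf1 y) ht
    _ = Pf y := Real.rpow_one _
    _ ≤ d * f x := hPfub y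
  have hfrpow_le : ∀ y (t : ℝ), t ≤ 1 → f y ^ t ≤ d * f x := by
    intro y t ht
    calc f y ^ t ≤ f y ^ (1 : ℝ) :=
        Real.rpow_le_rpow_of_exponent_le (hf1 y) ht
    _ = f y := Real.rpow_one _
    _ ≤ d * f x := hfub y
  -- pull-out property of the Markov kernel
  have pullout : ∀ (m : ℕ) (g : Ω → ℝ) (C : ℝ), StronglyMeasurable[ℱ m] g →
      (∀ ω, |g ω| ≤ C) →
      ∫ ω, g ω * f (X (m + 1) ω) ∂μ = ∫ ω, g ω * Pf (X m ω) ∂μ := by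
    intro m g C hgm hgC
    have hm := ℱ.le m
    have hgm0 : AEStronglyMeasurable g μ := (hgm.mono hm).aestronglyMeasurable
    have hF : Integrable (fun ω => f (X (m + 1) ω)) μ :=
      intBdd _ (d * f x) (hfm.comp (hXm (m + 1))).aestronglyMeasurable
        (fun ω => by rw [abs_of_pos (hfpos _)]; exact hfub _)
    have hC0 : 0 ≤ C := le_trans (abs_nonneg _) (hgC ω₀)
    have hgF : Integrable (fun ω => g ω * f (X (m + 1) ω)) μ := by
      apply intBdd _ (C * (d * f x))
        (hgm0.mul (hfm.comp (hXm (m + 1))).aestronglyMeasurable)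
      intro ω
      show |g ω * f (X (m + 1) ω)| ≤ C * (d * f x)
      rw [abs_mul]
      apply mul_le_mul (hgC ω) _ (abs_nonneg _) hC0
      rw [abs_of_pos (hfpos _)]; exact hfub _
    rw [← integral_condExp (f := fun ω => g ω * f (X (m + 1) ω)) hm]
    apply integral_congr_ae
    have h1 := condExp_mul_of_stronglyMeasurable_left (m := ℱ m) (μ := μ) hgm hgF hF
    filter_upwards [h1, hMarkovf m] with ω h1ω h2ω
    calc (μ[(fun ω => g ω * f (X (m + 1) ω))|ℱ m]) ω
        = (g * μ[(fun ω => f (X (m + 1) ω))|ℱ m]) ω := h1ω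
    _ = g ω * Pf (X m ω) := by rw [Pi.mul_apply, h2ω, hPfy]
  -- conditional Jensen step
  have jensen : ∀ (m : ℕ) (h : Ω → ℝ) (C : ℝ), StronglyMeasurable[ℱ m] h →
      (∀ ω, 0 ≤ h ω) → (∀ ω, h ω ≤ C) → ∀ t : ℝ, 0 ≤ t → t ≤ 1 →
      ∫ ω, h ω * f (X (m + 1) ω) ^ t ∂μ ≤ ∫ ω, h ω * Pf (X m ω) ^ t ∂μ := by
    intro m h C hhm hh0 hhC t ht0 ht1
    have hm := ℱ.le m
    have hC0 : 0 ≤ C := le_trans (hh0 ω₀) (hhC ω₀)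
    have hhabs : ∀ ω, |h ω| ≤ C := fun ω => by
      rw [abs_of_nonneg (hh0 ω)]; exact hhC ω
    have hh0' : AEStronglyMeasurable h μ := (hhm.mono hm).aestronglyMeasurable
    have hst_mul : ∀ ω, Pf (X m ω) * Pf (X m ω) ^ (t - 1) = Pf (X m ω) ^ t := by
      intro ω
      nth_rewrite 1 [← Real.rpow_one (Pf (X m ω))]
      rw [← Real.rpow_add (hPfpos _)]
      congr 1; ring
    have hpt : ∀ ω, h ω * f (X (m + 1) ω) ^ t ≤
        h ω * ((1 - t) * Pf (X m ω) ^ t)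
          + (h ω * (t * Pf (X m ω) ^ (t - 1))) * f (X (m + 1) ω) := by
      intro ω
      have hspos : 0 < Pf (X m ω) := hPfpos _
      have httpos : 0 < f (X (m + 1) ω) := hfpos _
      have hgeom : f (X (m + 1) ω) ^ t * Pf (X m ω) ^ (1 - t)
          ≤ t * f (X (m + 1) ω) + (1 - t) * Pf (X m ω) :=
        Real.geom_mean_le_arith_mean2_weighted ht0 (by linarith) httpos.le hspos.le (by ring)
      have h1 : f (X (m + 1) ω) ^ t
          = (f (X (m + 1) ω) ^ t * Pf (X m ω) ^ (1 - t)) * Pf (X m ω) ^ (t - 1) := by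
        rw [mul_assoc, ← Real.rpow_add hspos]
        have he : 1 - t + (t - 1) = 0 := by ring
        rw [he, Real.rpow_zero, mul_one]
      have h2 : (t * f (X (m + 1) ω) + (1 - t) * Pf (X m ω)) * Pf (X m ω) ^ (t - 1)
          = (1 - t) * Pf (X m ω) ^ t + (t * Pf (X m ω) ^ (t - 1)) * f (X (m + 1) ω) := by
        calc (t * f (X (m + 1) ω) + (1 - t) * Pf (X m ω)) * Pf (X m ω) ^ (t - 1)
            = t * Pf (X m ω) ^ (t - 1) * f (X (m + 1) ω)
              + (1 - t) * (Pf (X m ω) * Pf (X m ω) ^ (t - 1)) := by ring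
        _ = _ := by rw [hst_mul ω]; ring
      have h3 : f (X (m + 1) ω) ^ t
          ≤ (1 - t) * Pf (X m ω) ^ t + (t * Pf (X m ω) ^ (t - 1)) * f (X (m + 1) ω) := by
        rw [h1, ← h2]
        exact mul_le_mul_of_nonneg_right hgeom (Real.rpow_nonneg hspos.le _)
      calc h ω * f (X (m + 1) ω) ^ t
          ≤ h ω * ((1 - t) * Pf (X m ω) ^ t
            + (t * Pf (X m ω) ^ (t - 1)) * f (X (m + 1) ω)) :=
            mul_le_mul_of_nonneg_left h3 (hh0 ω)
      _ = h ω * ((1 - t) * Pf (X m ω) ^ t)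
            + (h ω * (t * Pf (X m ω) ^ (t - 1))) * f (X (m + 1) ω) := by ring
    -- the auxiliary ℱ m-measurable factor
    set g : Ω → ℝ := fun ω => h ω * (t * Pf (X m ω) ^ (t - 1)) with hgdef
    have hsrpow1 : ∀ ω, Pf (X m ω) ^ (t - 1) ≤ 1 := fun ω =>
      Real.rpow_le_one_of_one_le_of_nonpos (hPf1 _) (by linarith)
    have hsrpow0 : ∀ ω, 0 ≤ Pf (X m ω) ^ (t - 1) := fun ω =>
      Real.rpow_nonneg (hPfpos _).le _
    have hgSM : StronglyMeasurable[ℱ m] g :=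
      hhm.mul (measurable_const.mul
        (hPfrpow_meas (ℱ m) m (t - 1) (hXFm le_rfl))).stronglyMeasurable
    have hgbd : ∀ ω, |g ω| ≤ C := by
      intro ω
      show |h ω * (t * Pf (X m ω) ^ (t - 1))| ≤ C
      rw [abs_mul, abs_of_nonneg (hh0 ω),
        abs_of_nonneg (mul_nonneg ht0 (hsrpow0 ω))]
      have hfac : t * Pf (X m ω) ^ (t - 1) ≤ 1 := by
        calc t * Pf (X m ω) ^ (t - 1) ≤ 1 * 1 :=
            mul_le_mul ht1 (hsrpow1 ω) (hsrpow0 ω) zero_le_one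
        _ = 1 := one_mul 1
      calc h ω * (t * Pf (X m ω) ^ (t - 1)) ≤ C * 1 :=
          mul_le_mul (hhC ω) hfac (mul_nonneg ht0 (hsrpow0 ω)) hC0
      _ = C := mul_one C
    -- integrability of all pieces
    have hsa : AEStronglyMeasurable (fun ω => Pf (X m ω) ^ t) μ :=
      (hPfrpow_meas m0 m t (hXm m)).aestronglyMeasurable
    have hint1 : Integrable (fun ω => h ω * f (X (m + 1) ω) ^ t) μ := by
      apply intBdd _ (C * (d * f x)) (hh0'.mul (hfrpow_meas (m + 1) t).aestronglyMeasurable)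
      intro ω
      show |h ω * f (X (m + 1) ω) ^ t| ≤ C * (d * f x)
      rw [abs_mul, abs_of_nonneg (hh0 ω),
        abs_of_nonneg (Real.rpow_nonneg (hfpos _).le _)]
      exact mul_le_mul (hhC ω) (hfrpow_le _ t ht1) (Real.rpow_nonneg (hfpos _).le _) hC0
    have hint2 : Integrable (fun ω => h ω * ((1 - t) * Pf (X m ω) ^ t)) μ := by
      apply intBdd _ (C * (1 * (d * f x))) (hh0'.mul (aestronglyMeasurable_const.mul hsa))
      intro ω
      show |h ω * ((1 - t) * Pf (X m ω) ^ t)| ≤ C * (1 * (d * f x))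
      rw [abs_mul, abs_of_nonneg (hh0 ω), abs_mul,
        abs_of_nonneg (Real.rpow_nonneg (hPfpos _).le _)]
      apply mul_le_mul (hhC ω) _ (mul_nonneg (abs_nonneg _) (Real.rpow_nonneg (hPfpos _).le _)) hC0
      exact mul_le_mul (by rw [abs_le]; constructor <;> linarith)
        (hPfrpow_le _ t ht1) (Real.rpow_nonneg (hPfpos _).le _) zero_le_one
    have hgm0 : AEStronglyMeasurable g μ := (hgSM.mono hm).aestronglyMeasurable
    have hint3 : Integrable (fun ω => g ω * f (X (m + 1) ω)) μ := by
      apply intBdd _ (C * (d * f x))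
        (hgm0.mul (hfm.comp (hXm (m + 1))).aestronglyMeasurable)
      intro ω
      show |g ω * f (X (m + 1) ω)| ≤ C * (d * f x)
      rw [abs_mul]
      apply mul_le_mul (hgbd ω) _ (abs_nonneg _) hC0
      rw [abs_of_pos (hfpos _)]; exact hfub _
    have hint4 : Integrable (fun ω => g ω * Pf (X m ω)) μ := by
      apply intBdd _ (C * (d * f x))
        (hgm0.mul (hPfmeas.comp (hXm m)).aestronglyMeasurable)
      intro ω
      show |g ω * Pf (X m ω)| ≤ C * (d * f x)
      rw [abs_mul]
      apply mul_le_mul (hgbd ω) _ (abs_nonneg _) hC0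
      rw [abs_of_pos (hPfpos _)]; exact hPfub _
    have hkey := pullout m g C hgSM hgbd
    calc ∫ ω, h ω * f (X (m + 1) ω) ^ t ∂μ
        ≤ ∫ ω, (h ω * ((1 - t) * Pf (X m ω) ^ t)
          + g ω * f (X (m + 1) ω)) ∂μ :=
          integral_mono hint1 (hint2.add hint3) hpt
    _ = (∫ ω, h ω * ((1 - t) * Pf (X m ω) ^ t) ∂μ)
          + ∫ ω, g ω * f (X (m + 1) ω) ∂μ := integral_add hint2 hint3
    _ = (∫ ω, h ω * ((1 - t) * Pf (X m ω) ^ t) ∂μ)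
          + ∫ ω, g ω * Pf (X m ω) ∂μ := by rw [hkey]
    _ = ∫ ω, (h ω * ((1 - t) * Pf (X m ω) ^ t) + g ω * Pf (X m ω)) ∂μ :=
          (integral_add hint2 hint4).symm
    _ = ∫ ω, h ω * Pf (X m ω) ^ t ∂μ := by
          apply integral_congr_ae
          apply ae_of_all
          intro ω
          simp only [hgdef]
          linear_combination (h ω * t) * hst_mul ω
  -- the supermartingale-type sequence
  set G : ℕ → Ω → ℝ := fun m ω => ∑ j ∈ Finset.range m,
      φ (k + j) * Real.log (f (X (j + 1) ω) / Pf (X j ω)) with hGdef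
  set M : ℕ → Ω → ℝ := fun m ω => Real.exp (G m ω) with hMdef
  have hGm : ∀ m, Measurable[ℱ m] (G m) := by
    intro m
    apply Finset.measurable_sum
    intro j hj
    have hj' : j + 1 ≤ m := Finset.mem_range.1 hj
    exact measurable_const.mul ((hfm.comp (hXFm hj')).div
      (hPfmeas.comp (hXFm (Nat.le_of_succ_le hj')))).log
  have hMm : ∀ m, Measurable[ℱ m] (M m) := fun m => (hGm m).exp
  have hratio_pos : ∀ j (ω : Ω), 0 < f (X (j + 1) ω) / Pf (X j ω) :=
    fun j ω => div_pos (hfpos _) (hPfpos _)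
  have hratio_le : ∀ j (ω : Ω), f (X (j + 1) ω) / Pf (X j ω) ≤ d := by
    intro j ω
    rw [div_le_iff₀ (hPfpos _)]
    linarith [hfdPf (X (j + 1) ω) (X j ω), mul_comm (Pf (X j ω)) d]
  have hlogd : 0 ≤ Real.log d := Real.log_nonneg hd1
  have hterm_le : ∀ j (ω : Ω),
      φ (k + j) * Real.log (f (X (j + 1) ω) / Pf (X j ω)) ≤ Real.log d := by
    intro j ω
    rcases le_or_gt (Real.log (f (X (j + 1) ω) / Pf (X j ω))) 0 with hneg | hposl
    · nlinarith [(hφpos (k + j)).le]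
    · have h1 : Real.log (f (X (j + 1) ω) / Pf (X j ω)) ≤ Real.log d :=
        Real.log_le_log (hratio_pos j ω) (hratio_le j ω)
      nlinarith [hφle (k + j), (hφpos (k + j)).le]
  have hGub : ∀ m (ω : Ω), G m ω ≤ m * Real.log d := by
    intro m ω
    simp only [hGdef]
    calc ∑ j ∈ Finset.range m, φ (k + j) * Real.log (f (X (j + 1) ω) / Pf (X j ω))
        ≤ ∑ _j ∈ Finset.range m, Real.log d :=
          Finset.sum_le_sum fun j _ => hterm_le j ω
    _ = m * Real.log d := by rw [Finset.sum_const, Finset.card_range, nsmul_eq_mul]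
  have hMpos : ∀ m (ω : Ω), 0 < M m ω := fun m ω => Real.exp_pos _
  have hMub : ∀ m (ω : Ω), M m ω ≤ Real.exp (m * Real.log d) := fun m ω =>
    Real.exp_le_exp.2 (hGub m ω)
  have hMint : ∀ m, Integrable (M m) μ := by
    intro m
    apply intBdd _ (Real.exp (m * Real.log d))
      (((hMm m).mono (ℱ.le m) le_rfl).aestronglyMeasurable)
    intro ω
    rw [abs_of_pos (hMpos m ω)]
    exact hMub m ω
  -- supermartingale induction
  have hEM : ∀ m, ∫ ω, M m ω ∂μ ≤ 1 := by
    intro m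
    induction m with
    | zero => simp [hMdef, hGdef]
    | succ m ih =>
      have ht0 : 0 ≤ φ (k + m) := (hφpos _).le
      have ht1 : φ (k + m) ≤ 1 := hφle _
      set h : Ω → ℝ := fun ω => M m ω / Pf (X m ω) ^ (φ (k + m)) with hhdef
      have hsplit : (fun ω => M (m + 1) ω)
          = fun ω => h ω * f (X (m + 1) ω) ^ (φ (k + m)) := by
        funext ω
        simp only [hMdef, hGdef, hhdef]
        rw [Finset.sum_range_succ, Real.exp_add]
        have hr : Real.exp (φ (k + m) * Real.log (f (X (m + 1) ω) / Pf (X m ω)))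
            = f (X (m + 1) ω) ^ (φ (k + m)) / Pf (X m ω) ^ (φ (k + m)) := by
          rw [← Real.div_rpow (hfpos _).le (hPfpos _).le,
            Real.rpow_def_of_pos (hratio_pos m ω), mul_comm]
        rw [hr]; ring
      have hrpowpos : ∀ ω, 0 < Pf (X m ω) ^ (φ (k + m)) := fun ω =>
        Real.rpow_pos_of_pos (hPfpos _) _
      have hhm : StronglyMeasurable[ℱ m] h :=
        ((hMm m).div (hPfrpow_meas (ℱ m) m _ (hXFm le_rfl))).stronglyMeasurable
      have hh0 : ∀ ω, 0 ≤ h ω := fun ω =>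
        div_nonneg (hMpos m ω).le (hrpowpos ω).le
      have hhC : ∀ ω, h ω ≤ Real.exp (m * Real.log d) := by
        intro ω
        have hst1 : 1 ≤ Pf (X m ω) ^ (φ (k + m)) := by
          have h01 := Real.rpow_le_rpow_of_exponent_le (hPf1 (X m ω)) ht0
          rwa [Real.rpow_zero] at h01
        calc h ω ≤ M m ω := div_le_self (hMpos m ω).le hst1
        _ ≤ _ := hMub m ω
      have hkey := jensen m h _ hhm hh0 hhC (φ (k + m)) ht0 ht1
      calc ∫ ω, M (m + 1) ω ∂μ
          = ∫ ω, h ω * f (X (m + 1) ω) ^ (φ (k + m)) ∂μ := by rw [hsplit]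
      _ ≤ ∫ ω, h ω * Pf (X m ω) ^ (φ (k + m)) ∂μ := hkey
      _ = ∫ ω, M m ω ∂μ := by
          apply integral_congr_ae
          apply ae_of_all
          intro ω
          simp only [hhdef]
          exact div_mul_cancel₀ _ (hrpowpos ω).ne'
      _ ≤ 1 := ih
  -- rewrite Z via range-indexed sums
  have hZeq : ∀ ω, Z ω = Real.exp (∑ j ∈ Finset.range n, φ (k + j) * lg (X j ω)) := by
    intro ω
    simp only [hZdef]
    congr 1
    rw [Finset.sum_Ico_eq_sum_range]
    have hnk : n + k - k = n := by omega
    rw [hnk]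
    refine Finset.sum_congr rfl fun j _ => ?_
    have hkj : k + j - k = j := by omega
    rw [hkj]
  -- pointwise bound Z ≤ d * M n
  have hZM : ∀ ω, Z ω ≤ d * M n ω := by
    intro ω
    rw [hZeq ω]
    have hlg_split : ∀ j, lg (X j ω)
        = (Real.log (f (X j ω)) - Real.log (f (X (j + 1) ω)))
          + Real.log (f (X (j + 1) ω) / Pf (X j ω)) := by
      intro j
      simp only [hlgdef]
      rw [Real.log_div (hfpos _).ne' (hPfpos _).ne',
        Real.log_div (hfpos _).ne' (hPfpos _).ne']
      ring
    have habel : ∑ j ∈ Finset.range n,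
        φ (k + j) * (Real.log (f (X j ω)) - Real.log (f (X (j + 1) ω)))
        ≤ Real.log d := by
      apply abel_sum_bound (fun j => φ (k + j)) (fun j => Real.log (f (X j ω)))
        (Real.log d) hlogd (by simpa using hφle k) (fun j => (hφpos _).le)
        (fun j => hφmono (k + j) (k + (j + 1)) (by omega))
      intro j
      have hlogf : Real.log (f (X 0 ω)) ≤ Real.log (d * f (X j ω)) :=
        Real.log_le_log (hfpos _) (hfd _ _)
      rwa [Real.log_mul hdpos.ne' (hfpos _).ne'] at hlogf
    calc Real.exp (∑ j ∈ Finset.range n, φ (k + j) * lg (X j ω))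
        = Real.exp ((∑ j ∈ Finset.range n,
            φ (k + j) * (Real.log (f (X j ω)) - Real.log (f (X (j + 1) ω)))) + G n ω) := by
          congr 1
          simp only [hGdef]
          rw [← Finset.sum_add_distrib]
          exact Finset.sum_congr rfl fun j _ => by rw [hlg_split j]; ring
    _ = Real.exp (∑ j ∈ Finset.range n,
          φ (k + j) * (Real.log (f (X j ω)) - Real.log (f (X (j + 1) ω)))) * M n ω := by
          rw [Real.exp_add]
    _ ≤ d * M n ω := by
          apply mul_le_mul_of_nonneg_right _ (hMpos n ω).le
          calc Real.exp (∑ j ∈ Finset.range n,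
              φ (k + j) * (Real.log (f (X j ω)) - Real.log (f (X (j + 1) ω))))
              ≤ Real.exp (Real.log d) := Real.exp_le_exp.2 habel
          _ = d := Real.exp_log hdpos
  have hZmeas : Measurable Z := by
    apply Measurable.exp
    apply Finset.measurable_sum
    intro i _
    exact measurable_const.mul (hlgc.measurable.comp (hXm (i - k)))
  have hZint : Integrable Z μ := by
    apply intBdd _ (d * Real.exp (n * Real.log d)) hZmeas.aestronglyMeasurable
    intro ω
    rw [abs_of_pos (by simp only [hZdef]; exact Real.exp_pos _)]
    calc Z ω ≤ d * M n ω := hZM ω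
    _ ≤ d * Real.exp (n * Real.log d) :=
        mul_le_mul_of_nonneg_left (hMub n ω) hdpos.le
  have hEZ : ∫ ω, Z ω ∂μ ≤ d := by
    calc ∫ ω, Z ω ∂μ ≤ ∫ ω, d * M n ω ∂μ :=
        integral_mono hZint ((hMint n).const_mul d) hZM
    _ = d * ∫ ω, M n ω ∂μ := integral_const_mul d _
    _ ≤ d * 1 := mul_le_mul_of_nonneg_left (hEM n) hdpos.le
    _ = d := mul_one d
  by_cases hbdd : BddBelow T
  · have hcL : ∀ ω ∈ A, Real.exp (c * sInf T) ≤ Z ω := by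
      intro ω hω
      have hmem : (∫ y, lg y ∂(discountedEmpirical φ k n X ω)) ∈ T := ⟨_, hω, rfl⟩
      have hLle := csInf_le hbdd hmem
      have hle : c * sInf T ≤ ∑ i ∈ Finset.Ico k (n + k), φ i * lg (X (i - k) ω) := by
        rw [← hsum ω]; exact mul_le_mul_of_nonneg_left hLle hcnn
      exact Real.exp_le_exp.2 hle
    have h1 : (μ A).toReal * Real.exp (c * sInf T) ≤ ∫ ω, Z ω ∂μ := by
      have e1 : ∫ _ in A, Real.exp (c * sInf T) ∂μ
          = (μ A).toReal * Real.exp (c * sInf T) := by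
        rw [setIntegral_const, smul_eq_mul, Measure.real]
      calc (μ A).toReal * Real.exp (c * sInf T)
          = ∫ _ in A, Real.exp (c * sInf T) ∂μ := e1.symm
      _ ≤ ∫ ω in A, Z ω ∂μ :=
          setIntegral_mono_on (integrable_const _).integrableOn hZint.integrableOn hBmeas hcL
      _ ≤ ∫ ω, Z ω ∂μ :=
          setIntegral_le_integral hZint (ae_of_all _ fun ω => (Real.exp_pos _).le)
    have h2 := le_trans h1 hEZ
    have he : (0 : ℝ) < Real.exp (c * sInf T) := Real.exp_pos _
    rw [neg_mul, Real.exp_neg]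
    have h3 : (μ A).toReal ≤ d / Real.exp (c * sInf T) := (le_div_iff₀ he).2 h2
    simpa [div_eq_mul_inv] using h3
  · rw [csInf_of_not_bddBelow hbdd, Real.sInf_empty, mul_zero, Real.exp_zero, mul_one]
    calc (μ A).toReal ≤ (1 : ENNReal).toReal := ENNReal.toReal_mono ENNReal.one_ne_top prob_le_one
    _ = 1 := by simp
    _ ≤ d := hd1
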